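/- For every n ∈ ℕ and every column index 1 ≤ j ≤ 2^n, the sum of the absolute values of the entries in rows 2 through 2^n of the column j of the 2^n × 2^n Haar matrix H_n equals 2^{-n/2} Σ_{m=0}^{n-1} 2^{m/2} = (2^{1/2} - 2^{-(n-1)/2})/(2^{1/2} - 1), which is strictly less than 1 + √2. -/

import Mathlib

open MeasureTheory Classical in
/-- The Haar function `h_j^{(k)}` of level `k`, `1 ≤ j ≤ 2^k`. -/
noncomputable def haarFn (k j : ℕ) (t : ℝ) : ℝ :=
  if (2 * (j : ℝ) - 2) / 2 ^ (k + 1) < t ∧ t < (2 * (j : ℝ) - 1) / 2 ^ (k + 1) then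
    (2 : ℝ) ^ ((k : ℝ) / 2)
  else if (2 * (j : ℝ) - 1) / 2 ^ (k + 1) < t ∧ t < (2 * (j : ℝ)) / 2 ^ (k + 1) then
    -((2 : ℝ) ^ ((k : ℝ) / 2))
  else 0

/-- The Haar system `h_n`: `h_1 = 1` and `h_{2^k + j} = h_j^{(k)}`. -/
noncomputable def haar (n : ℕ) : ℝ → ℝ :=
  if n ≤ 1 then (fun _ => 1)
  else haarFn (Nat.log2 (n - 1)) (n - 2 ^ Nat.log2 (n - 1))

lemma abs_haarFn (m j' : ℕ) (x : ℝ) (hx : ∀ z : ℤ, x * 2 ^ (m + 1) ≠ (z : ℝ)) :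
    |haarFn m j' x| =
      if ((j' : ℝ) - 1) / 2 ^ m < x ∧ x < (j' : ℝ) / 2 ^ m then (2 : ℝ) ^ ((m : ℝ) / 2)
      else 0 := by
  have h2m : (0 : ℝ) < 2 ^ m := by positivity
  have h2m1 : (0 : ℝ) < 2 ^ (m + 1) := by positivity
  have hA : (2 * (j' : ℝ) - 2) / 2 ^ (m + 1) = ((j' : ℝ) - 1) / 2 ^ m := by
    rw [pow_succ]; field_simp
  have hC : (2 * (j' : ℝ)) / 2 ^ (m + 1) = (j' : ℝ) / 2 ^ m := by
    rw [pow_succ]; field_simp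
  have hxB : x ≠ (2 * (j' : ℝ) - 1) / 2 ^ (m + 1) := by
    intro h
    apply hx (2 * (j' : ℤ) - 1)
    rw [h]; push_cast; field_simp
  have hpos : (0 : ℝ) < (2 : ℝ) ^ ((m : ℝ) / 2) := Real.rpow_pos_of_pos (by norm_num) _
  have hAB : (2 * (j' : ℝ) - 2) / 2 ^ (m + 1) < (2 * (j' : ℝ) - 1) / 2 ^ (m + 1) := by
    gcongr
    · linarith
  have hBC : (2 * (j' : ℝ) - 1) / 2 ^ (m + 1) < (2 * (j' : ℝ)) / 2 ^ (m + 1) := by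
    gcongr
    · linarith
  unfold haarFn
  by_cases h1 : (2 * (j' : ℝ) - 2) / 2 ^ (m + 1) < x ∧ x < (2 * (j' : ℝ) - 1) / 2 ^ (m + 1)
  · rw [if_pos h1, abs_of_pos hpos, if_pos]
    rw [← hA, ← hC]
    exact ⟨h1.1, lt_trans h1.2 hBC⟩
  · by_cases h2 : (2 * (j' : ℝ) - 1) / 2 ^ (m + 1) < x ∧ x < (2 * (j' : ℝ)) / 2 ^ (m + 1)
    · rw [if_neg h1, if_pos h2, abs_neg, abs_of_pos hpos, if_pos]
      rw [← hA, ← hC]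
      exact ⟨lt_trans hAB h2.1, h2.2⟩
    · rw [if_neg h1, if_neg h2, abs_zero, if_neg]
      rintro ⟨hp1, hp2⟩
      rw [← hA] at hp1
      rw [← hC] at hp2
      rcases lt_or_gt_of_ne hxB with h | h
      · exact h1 ⟨hp1, h⟩
      · exact h2 ⟨h, hp2⟩

lemma sum_abs_haarFn (m : ℕ) (x : ℝ) (hx0 : 0 < x) (hx1 : x < 1)
    (hx : ∀ z : ℤ, x * 2 ^ (m + 1) ≠ (z : ℝ)) :
    ∑ j' ∈ Finset.Icc 1 (2 ^ m), |haarFn m j' x| = (2 : ℝ) ^ ((m : ℝ) / 2) := by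
  have h2m : (0 : ℝ) < 2 ^ m := by positivity
  have hxm : ∀ z : ℤ, x * 2 ^ m ≠ (z : ℝ) := by
    intro z h
    apply hx (2 * z)
    push_cast
    rw [pow_succ, ← mul_assoc, h]; ring
  have hfl0 : 0 ≤ ⌊x * 2 ^ m⌋ := Int.floor_nonneg.mpr (by positivity)
  have hfllt : ⌊x * 2 ^ m⌋ < ((2 ^ m : ℕ) : ℤ) := by
    have hlt : x * 2 ^ m < 2 ^ m := by nlinarith
    exact Int.floor_lt.mpr (by push_cast; linarith)
  have hfllt' : ((⌊x * 2 ^ m⌋ : ℝ)) < x * 2 ^ m :=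
    lt_of_le_of_ne (Int.floor_le _) (fun h => hxm _ h.symm)
  set J : ℕ := (⌊x * 2 ^ m⌋).toNat + 1 with hJdef
  have hJcast : ((J : ℝ) - 1) = (⌊x * 2 ^ m⌋ : ℝ) := by
    have h : ((J : ℤ) - 1) = ⌊x * 2 ^ m⌋ := by omega
    exact_mod_cast h
  have hJmem : J ∈ Finset.Icc 1 (2 ^ m) := by
    rw [Finset.mem_Icc]
    omega
  have hJ1 : ((J : ℝ) - 1) / 2 ^ m < x := by
    rw [div_lt_iff₀ h2m, hJcast]; exact hfllt'
  have hJ2 : x < (J : ℝ) / 2 ^ m := by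
    rw [lt_div_iff₀ h2m]
    have := Int.lt_floor_add_one (x * 2 ^ m)
    have h1 : (J : ℝ) = (⌊x * 2 ^ m⌋ : ℝ) + 1 := by linarith [hJcast]
    linarith
  rw [Finset.sum_congr rfl (fun j' _ => abs_haarFn m j' x hx)]
  rw [Finset.sum_eq_single_of_mem J hJmem]
  · rw [if_pos ⟨hJ1, hJ2⟩]
  · intro b hb hne
    rw [Finset.mem_Icc] at hb
    rw [if_neg]
    rintro ⟨hb1, hb2⟩
    apply hne
    have h1 : ((b : ℤ) - 1) ≤ ⌊x * 2 ^ m⌋ := by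
      apply Int.le_floor.mpr
      push_cast
      rw [div_lt_iff₀ h2m] at hb1
      linarith
    have h2 : ⌊x * 2 ^ m⌋ < (b : ℤ) := by
      apply Int.floor_lt.mpr
      push_cast
      rw [lt_div_iff₀ h2m] at hb2
      linarith
    omega

lemma haar_add (m j' : ℕ) (h1 : 1 ≤ j') (h2 : j' ≤ 2 ^ m) :
    haar (2 ^ m + j') = haarFn m j' := by
  have h2m : 1 ≤ 2 ^ m := Nat.one_le_two_pow
  rw [haar, if_neg (by omega)]
  have hlog : Nat.log2 (2 ^ m + j' - 1) = m := by
    rw [Nat.log2_eq_log_two]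
    apply Nat.log_eq_of_pow_le_of_lt_pow (by omega)
    rw [pow_succ]; omega
  rw [hlog]
  have h3 : 2 ^ m + j' - 2 ^ m = j' := by omega
  rw [h3]

lemma sum_Icc_two_pow (f : ℕ → ℝ) (n : ℕ) :
    ∑ i ∈ Finset.Icc 2 (2 ^ n), f i
      = ∑ m ∈ Finset.range n, ∑ j' ∈ Finset.Icc 1 (2 ^ m), f (2 ^ m + j') := by
  induction n with
  | zero => simp
  | succ n ih =>
    rw [Finset.sum_range_succ, ← ih]
    have h1 : ∀ N : ℕ, Finset.Icc 2 N = Finset.Ioc 1 N := fun N => Finset.Icc_add_one_left_eq_Ioc 1 N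
    rw [h1, h1, ← Finset.sum_Ioc_consecutive f (by exact Nat.one_le_two_pow)
      (Nat.pow_le_pow_right (by norm_num) (Nat.le_succ n))]
    congr 1
    have hmap : Finset.Ioc (2 ^ n) (2 ^ (n + 1))
        = Finset.map (addLeftEmbedding (2 ^ n)) (Finset.Ioc 0 (2 ^ n)) := by
      rw [Finset.map_add_left_Ioc]
      congr 1 <;> omega
    rw [hmap, Finset.sum_map]
    have : Finset.Ioc 0 (2 ^ n) = Finset.Icc 1 (2 ^ n) := (Finset.Icc_add_one_left_eq_Ioc 0 _).symm
    rw [this]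
    rfl

theorem stmt19 (n j : ℕ) (hj1 : 1 ≤ j) (hj : j ≤ 2 ^ n) :
    ∑ i ∈ Finset.Icc 2 (2 ^ n),
        |(2 : ℝ) ^ (-(n : ℝ) / 2) * haar i (((j : ℝ) - 1 / 2) * ((2 : ℝ) ^ n)⁻¹)|
      = (2 : ℝ) ^ (-(n : ℝ) / 2) * ∑ m ∈ Finset.range n, (2 : ℝ) ^ ((m : ℝ) / 2)
    ∧ (2 : ℝ) ^ (-(n : ℝ) / 2) * ∑ m ∈ Finset.range n, (2 : ℝ) ^ ((m : ℝ) / 2)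
        < 1 + Real.sqrt 2 := by
  set x : ℝ := ((j : ℝ) - 1 / 2) * ((2 : ℝ) ^ n)⁻¹ with hxdef
  have h2n : (0 : ℝ) < 2 ^ n := by positivity
  have hj1' : (1 : ℝ) ≤ (j : ℝ) := by exact_mod_cast hj1
  have hjn : (j : ℝ) ≤ 2 ^ n := by exact_mod_cast (by push_cast; exact_mod_cast hj : (j:ℝ) ≤ ((2^n : ℕ) : ℝ))
  have hx0 : 0 < x := mul_pos (by linarith) (inv_pos.mpr h2n)
  have hx1 : x < 1 := by
    have h := mul_lt_mul_of_pos_right (show (j : ℝ) - 1 / 2 < 2 ^ n by linarith)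
      (inv_pos.mpr h2n)
    rwa [mul_inv_cancel₀ (ne_of_gt h2n)] at h
  have hxz : ∀ m, m < n → ∀ z : ℤ, x * 2 ^ (m + 1) ≠ (z : ℝ) := by
    intro m hm z hz
    obtain ⟨k, hk⟩ : ∃ k, n = m + 1 + k := ⟨n - (m + 1), by omega⟩
    subst hk
    have h2k : ((2 : ℝ) ^ k) ≠ 0 := by positivity
    have h2m1 : ((2 : ℝ) ^ (m + 1)) ≠ 0 := by positivity
    have hx2 : x * 2 ^ (m + 1) = ((j : ℝ) - 1 / 2) / 2 ^ k := by
      rw [hxdef, pow_add]; field_simp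
    have key : (2 * (j : ℝ) - 1) = (z : ℝ) * 2 ^ (k + 1) := by
      rw [hx2, div_eq_iff h2k] at hz
      rw [pow_succ]
      linarith
    have key' : (2 * (j : ℤ) - 1) = z * 2 ^ (k + 1) := by exact_mod_cast key
    obtain ⟨t, ht⟩ : Even (2 * (j : ℤ) - 1) := ⟨z * 2 ^ k, by rw [key']; ring⟩
    omega
  have hcnn : (0 : ℝ) ≤ (2 : ℝ) ^ (-(n : ℝ) / 2) := Real.rpow_nonneg (by norm_num) _
  have hsum : ∑ i ∈ Finset.Icc 2 (2 ^ n), |haar i x| = ∑ m ∈ Finset.range n, (2 : ℝ) ^ ((m : ℝ) / 2) := by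
    rw [sum_Icc_two_pow (fun i => |haar i x|) n]
    refine Finset.sum_congr rfl ?_
    intro m hm
    rw [Finset.mem_range] at hm
    calc ∑ j' ∈ Finset.Icc 1 (2 ^ m), |haar (2 ^ m + j') x|
        = ∑ j' ∈ Finset.Icc 1 (2 ^ m), |haarFn m j' x| := by
          refine Finset.sum_congr rfl ?_
          intro j' hj'
          rw [Finset.mem_Icc] at hj'
          rw [haar_add m j' hj'.1 hj'.2]
      _ = (2 : ℝ) ^ ((m : ℝ) / 2) := sum_abs_haarFn m x hx0 hx1 (hxz m hm)
  have heq : ∑ i ∈ Finset.Icc 2 (2 ^ n),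
        |(2 : ℝ) ^ (-(n : ℝ) / 2) * haar i x|
      = (2 : ℝ) ^ (-(n : ℝ) / 2) * ∑ m ∈ Finset.range n, (2 : ℝ) ^ ((m : ℝ) / 2) := by
    rw [← hsum, Finset.mul_sum]
    refine Finset.sum_congr rfl ?_
    intro i _
    rw [abs_mul, abs_of_nonneg hcnn]
  refine ⟨heq, ?_⟩
  -- second part
  set r := Real.sqrt 2 with hrdef
  have hr1 : 1 < r := by
    rw [hrdef, show (1 : ℝ) = Real.sqrt 1 from Real.sqrt_one.symm]
    exact Real.sqrt_lt_sqrt (by norm_num) (by norm_num)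
  have hr2 : r ^ 2 = 2 := Real.sq_sqrt (by norm_num)
  have hpow : ∀ m : ℕ, (2 : ℝ) ^ ((m : ℝ) / 2) = r ^ m := by
    intro m
    rw [hrdef, Real.sqrt_eq_rpow, ← Real.rpow_natCast ((2 : ℝ) ^ ((1 : ℝ) / 2)) m,
      ← Real.rpow_mul (by norm_num)]
    congr 1
    ring
  have hrn : (0 : ℝ) < r ^ n := pow_pos (by linarith) n
  have hcn : (2 : ℝ) ^ (-(n : ℝ) / 2) = (r ^ n)⁻¹ := by
    rw [show -(n : ℝ) / 2 = -((n : ℝ) / 2) by ring, Real.rpow_neg (by norm_num), hpow n]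
  rw [hcn, Finset.sum_congr rfl (fun m _ => hpow m), geom_sum_eq (by linarith : r ≠ 1)]
  have hinv : 0 < (r ^ n)⁻¹ := inv_pos.mpr hrn
  rw [show (r ^ n)⁻¹ * ((r ^ n - 1) / (r - 1)) = (1 - (r ^ n)⁻¹) / (r - 1) by
    field_simp]
  rw [div_lt_iff₀ (by linarith : (0 : ℝ) < r - 1)]
  nlinarith [hr2]
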